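/- Let s ↦ (t,x,v,a,p_t,p_x,p_v,p_a)(s) be a differentiable solution of the 1D Hamiltonian geodesic system (H1) with t(0)=x(0)=v(0)=a(0)=0 and p_t(0) > 0, and set h(s) = p_t + v(s)·p_x + a(s)·p_v(s). If S > 0 is such that p_a(s)² < p_t² + p_a(0)² for all s ∈ [0,S], then h(s) = √(p_t² + p_a(0)² − p_a(s)²) > 0 for all s ∈ [0,S]. -/

import Mathlib

/-- For a solution of (H1) starting at the origin with `p_t(0) > 0`,
as long as `p_a(s)² < p_t² + p_a(0)²` on `[0, S]`, the factor
`h = p_t + v·p_x + a·p_v` satisfies `h(s) = √(p_t² + p_a(0)² − p_a(s)²) > 0`. -/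
theorem stmt_13
    (t x v a pt px pv pa : ℝ → ℝ)
    (h : ℝ → ℝ)
    (hh : ∀ s, h s = pt s + v s * px s + a s * pv s)
    (hpt : ∀ s, HasDerivAt pt 0 s)
    (hpx : ∀ s, HasDerivAt px 0 s)
    (hpv : ∀ s, HasDerivAt pv (-(px s) * h s) s)
    (hpa : ∀ s, HasDerivAt pa (-(pv s) * h s) s)
    (ht : ∀ s, HasDerivAt t (h s) s)
    (hx : ∀ s, HasDerivAt x (v s * h s) s)
    (hv : ∀ s, HasDerivAt v (a s * h s) s)
    (ha : ∀ s, HasDerivAt a (pa s) s)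
    (ht0 : t 0 = 0) (hx0 : x 0 = 0) (hv0 : v 0 = 0) (ha0 : a 0 = 0)
    (hpt0 : 0 < pt 0)
    (S : ℝ) (hS : 0 < S)
    (hbound : ∀ s ∈ Set.Icc (0 : ℝ) S, pa s ^ 2 < pt 0 ^ 2 + pa 0 ^ 2) :
    ∀ s ∈ Set.Icc (0 : ℝ) S,
      h s = Real.sqrt (pt 0 ^ 2 + pa 0 ^ 2 - pa s ^ 2) ∧ 0 < h s := by
  -- derivative of h
  have hh' : ∀ s, HasDerivAt h (pa s * pv s) s := by
    intro s
    have heq : h =ᶠ[nhds s] fun x => pt x + (v x * px x + a x * pv x) :=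
      Filter.Eventually.of_forall (fun y => by rw [hh y]; ring)
    have key := ((hpt s).add (((hv s).mul (hpx s)).add ((ha s).mul (hpv s)))).congr_of_eventuallyEq
      heq
    exact key.congr_deriv (by ring)
  -- conserved quantity
  have hg' : ∀ s, HasDerivAt (fun s => h s ^ 2 + pa s ^ 2) 0 s := by
    intro s
    have := ((hh' s).pow 2).add ((hpa s).pow 2)
    exact this.congr_deriv (by norm_num; ring)
  have hconst : ∀ s, h s ^ 2 + pa s ^ 2 = pt 0 ^ 2 + pa 0 ^ 2 := by
    have hc := is_const_of_deriv_eq_zero (f := fun s => h s ^ 2 + pa s ^ 2)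
      (fun y => (hg' y).differentiableAt) (fun y => (hg' y).deriv)
    intro s
    have h0 : h 0 = pt 0 := by rw [hh 0, hv0, ha0]; ring
    have := hc s 0
    rw [this, h0]
  have hcont : Continuous h := by
    have : Differentiable ℝ h := fun s => (hh' s).differentiableAt
    exact this.continuous
  have h0 : h 0 = pt 0 := by rw [hh 0, hv0, ha0]; ring
  -- positivity
  have hsq : ∀ s ∈ Set.Icc (0 : ℝ) S, h s ^ 2 = pt 0 ^ 2 + pa 0 ^ 2 - pa s ^ 2 := by
    intro s hs
    have := hconst s
    linarith
  have hpos : ∀ s ∈ Set.Icc (0 : ℝ) S, 0 < h s := by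
    intro s hs
    by_contra hle
    push_neg at hle
    have hne : h s ≠ 0 := by
      intro h0'
      have := hsq s hs
      rw [h0'] at this
      have := hbound s hs
      nlinarith
    have hlt : h s < 0 := lt_of_le_of_ne hle hne
    obtain ⟨c, hc, hc0⟩ : ∃ c ∈ Set.Icc (0 : ℝ) s, h c = 0 := by
      have := intermediate_value_Icc' hs.1 hcont.continuousOn
      have h0mem : (0 : ℝ) ∈ Set.Icc (h s) (h 0) := ⟨le_of_lt hlt, by rw [h0]; exact le_of_lt hpt0⟩
      obtain ⟨c, hc, hc0⟩ := this h0mem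
      exact ⟨c, hc, hc0⟩
    have hcS : c ∈ Set.Icc (0 : ℝ) S := ⟨hc.1, le_trans hc.2 hs.2⟩
    have := hsq c hcS
    rw [hc0] at this
    have := hbound c hcS
    nlinarith
  intro s hs
  have hp := hpos s hs
  constructor
  · have : Real.sqrt (h s ^ 2) = h s := Real.sqrt_sq hp.le
    rw [← hsq s hs, this]
  · exact hp
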